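/- Assume w is quasi-definite. Then for every n ≥ 1: H^R_n·(H^R_{n−1})^{−1} = I − (α^R_{2,n})†·α^L_{1,n} and H^L_n·(H^L_{n−1})^{−1} = I − α^L_{1,n}·(α^R_{2,n})†; consequently the matrices I − (α^R_{2,n})†·α^L_{1,n} and I − α^L_{1,n}·(α^R_{2,n})† are invertible. -/

import Mathlib

open Complex Matrix

set_option maxHeartbeats 1000000

noncomputable section

/-- Normalized matrix-valued integral over the unit circle:
`∮ f(ζ) dm(ζ) := (2π)⁻¹ ∫₀^{2π} f(e^{iθ}) dθ`, taken entrywise. -/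
def circInt (N : ℕ) (f : ℂ → Matrix (Fin N) (Fin N) ℂ) : Matrix (Fin N) (Fin N) ℂ :=
  Matrix.of fun i j =>
    (2 * Real.pi)⁻¹ • ∫ θ in (0:ℝ)..(2 * Real.pi), f (Complex.exp (θ * Complex.I)) i j

/-- Evaluation at `z` of the matrix polynomial with coefficients `c 0, …, c n`. -/
def mPolyEval {N : ℕ} (c : ℕ → Matrix (Fin N) (Fin N) ℂ) (n : ℕ) (z : ℂ) :
    Matrix (Fin N) (Fin N) ℂ :=
  ∑ k ∈ Finset.range (n + 1), z ^ k • c k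

/-- Evaluation at `z` of the reciprocal polynomial `P̃(z) = ∑_{k=0}^n (c (n-k))ᴴ z^k`. -/
def mRecipEval {N : ℕ} (c : ℕ → Matrix (Fin N) (Fin N) ℂ) (n : ℕ) (z : ℂ) :
    Matrix (Fin N) (Fin N) ℂ :=
  ∑ k ∈ Finset.range (n + 1), z ^ k • (c (n - k))ᴴ

/-- The `j`-th moment `μ̂ j = ∮ w(ζ) ζ^{-j} dm(ζ)` of the matrix weight `w`. -/
def mMoment (N : ℕ) (w : ℂ → Matrix (Fin N) (Fin N) ℂ) (j : ℤ) : Matrix (Fin N) (Fin N) ℂ :=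
  circInt N fun ζ => ζ ^ (-j) • w ζ

/-- Quasi-definiteness: all the truncated block Toeplitz moment matrices
`M^L_[n]` and `M^R_[n]` are invertible. -/
def QuasiDef (N : ℕ) (w : ℂ → Matrix (Fin N) (Fin N) ℂ) : Prop :=
  ∀ n : ℕ, 1 ≤ n →
    IsUnit (Matrix.of fun p q : Fin n × Fin N =>
      mMoment N w ((p.1 : ℤ) - (q.1 : ℤ)) p.2 q.2) ∧
    IsUnit (Matrix.of fun p q : Fin n × Fin N =>
      mMoment N w ((q.1 : ℤ) - (p.1 : ℤ)) p.2 q.2)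

/-- `P n` lists the coefficients of the monic degree-`n` Szegő polynomial `P^L_{1,n}`:
monicity together with `∮ P^L_{1,n}(ζ) w(ζ) ζ^{-j} dm(ζ) = 0` for `j = 0,…,n-1`. -/
def IsSzPL1 (N : ℕ) (w : ℂ → Matrix (Fin N) (Fin N) ℂ)
    (P : ℕ → ℕ → Matrix (Fin N) (Fin N) ℂ) : Prop :=
  ∀ n : ℕ, P n n = 1 ∧ (∀ k, n < k → P n k = 0) ∧
    ∀ j < n, circInt N (fun ζ => ζ ^ (-(j : ℤ)) • (mPolyEval (P n) n ζ * w ζ)) = 0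

/-- `P n` lists the coefficients of the monic degree-`n` Szegő polynomial `P^R_{1,n}`:
monicity together with `∮ ζ^{-j} w(ζ) P^R_{1,n}(ζ) dm(ζ) = 0` for `j = 0,…,n-1`. -/
def IsSzPR1 (N : ℕ) (w : ℂ → Matrix (Fin N) (Fin N) ℂ)
    (P : ℕ → ℕ → Matrix (Fin N) (Fin N) ℂ) : Prop :=
  ∀ n : ℕ, P n n = 1 ∧ (∀ k, n < k → P n k = 0) ∧
    ∀ j < n, circInt N (fun ζ => ζ ^ (-(j : ℤ)) • (w ζ * mPolyEval (P n) n ζ)) = 0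

/-- `P n` lists the coefficients of the monic degree-`n` Szegő polynomial `P^L_{2,n}`:
monicity together with `∮ ζ^{j} w(ζ) (P^L_{2,n}(ζ))† dm(ζ) = 0` for `j = 0,…,n-1`. -/
def IsSzPL2 (N : ℕ) (w : ℂ → Matrix (Fin N) (Fin N) ℂ)
    (P : ℕ → ℕ → Matrix (Fin N) (Fin N) ℂ) : Prop :=
  ∀ n : ℕ, P n n = 1 ∧ (∀ k, n < k → P n k = 0) ∧
    ∀ j < n, circInt N (fun ζ => ζ ^ j • (w ζ * (mPolyEval (P n) n ζ)ᴴ)) = 0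

/-- `P n` lists the coefficients of the monic degree-`n` Szegő polynomial `P^R_{2,n}`:
monicity together with `∮ (P^R_{2,n}(ζ))† w(ζ) ζ^{j} dm(ζ) = 0` for `j = 0,…,n-1`. -/
def IsSzPR2 (N : ℕ) (w : ℂ → Matrix (Fin N) (Fin N) ℂ)
    (P : ℕ → ℕ → Matrix (Fin N) (Fin N) ℂ) : Prop :=
  ∀ n : ℕ, P n n = 1 ∧ (∀ k, n < k → P n k = 0) ∧
    ∀ j < n, circInt N (fun ζ => ζ ^ j • ((mPolyEval (P n) n ζ)ᴴ * w ζ)) = 0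

/-- The Verblunsky matrix of the family `P`: the value at `0` of its `n`-th member. -/
def szVer {N : ℕ} (P : ℕ → ℕ → Matrix (Fin N) (Fin N) ℂ) (n : ℕ) :
    Matrix (Fin N) (Fin N) ℂ :=
  mPolyEval (P n) n 0

/-- Quasi-tau matrix `H^L_n = ∮ P^L_{1,n}(ζ) w(ζ) ζ^{-n} dm(ζ)` (from the family `P^L_{1,·}`). -/
def szHL (N : ℕ) (w : ℂ → Matrix (Fin N) (Fin N) ℂ)
    (P : ℕ → ℕ → Matrix (Fin N) (Fin N) ℂ) (n : ℕ) : Matrix (Fin N) (Fin N) ℂ :=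
  circInt N fun ζ => ζ ^ (-(n : ℤ)) • (mPolyEval (P n) n ζ * w ζ)

/-- Quasi-tau matrix `H^R_n = ∮ ζ^{-n} w(ζ) P^R_{1,n}(ζ) dm(ζ)` (from the family `P^R_{1,·}`). -/
def szHR (N : ℕ) (w : ℂ → Matrix (Fin N) (Fin N) ℂ)
    (P : ℕ → ℕ → Matrix (Fin N) (Fin N) ℂ) (n : ℕ) : Matrix (Fin N) (Fin N) ℂ :=
  circInt N fun ζ => ζ ^ (-(n : ℤ)) • (w ζ * mPolyEval (P n) n ζ)

/-- Cauchy transform `Q^L_{1,n}(z) = ∮ ζ^{-n} P^L_{1,n}(ζ) w(ζ) (1-ζ^{-1}z)^{-1} dm(ζ)`. -/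
def szQL1 (N : ℕ) (w : ℂ → Matrix (Fin N) (Fin N) ℂ)
    (P : ℕ → ℕ → Matrix (Fin N) (Fin N) ℂ) (n : ℕ) (z : ℂ) : Matrix (Fin N) (Fin N) ℂ :=
  circInt N fun ζ => (ζ ^ (-(n : ℤ)) * (1 - ζ⁻¹ * z)⁻¹) • (mPolyEval (P n) n ζ * w ζ)

/-- Cauchy transform `Q^R_{2,n}(z) = ∮ ζ^{-(n+1)} P̃^R_{2,n}(ζ) w(ζ) (1-ζ^{-1}z)^{-1} dm(ζ)`. -/
def szQR2 (N : ℕ) (w : ℂ → Matrix (Fin N) (Fin N) ℂ)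
    (P : ℕ → ℕ → Matrix (Fin N) (Fin N) ℂ) (n : ℕ) (z : ℂ) : Matrix (Fin N) (Fin N) ℂ :=
  circInt N fun ζ => (ζ ^ (-((n : ℤ) + 1)) * (1 - ζ⁻¹ * z)⁻¹) • (mRecipEval (P n) n ζ * w ζ)

-- continuity of circle param
lemma contCirc : Continuous fun θ : ℝ => Complex.exp (θ * Complex.I) := by fun_prop

lemma contZpow (e : ℤ) : Continuous fun θ : ℝ => Complex.exp (θ * Complex.I) ^ e :=
  contCirc.zpow₀ e (fun θ => Or.inl (Complex.exp_ne_zero _))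

lemma circInt_congr {N : ℕ} {f g : ℂ → Matrix (Fin N) (Fin N) ℂ}
    (h : ∀ θ : ℝ, f (Complex.exp (θ * Complex.I)) = g (Complex.exp (θ * Complex.I))) :
    circInt N f = circInt N g := by
  unfold circInt
  ext i j
  simp only [Matrix.of_apply]
  congr 1
  apply intervalIntegral.integral_congr
  intro θ _
  show f (Complex.exp (θ * Complex.I)) i j = g (Complex.exp (θ * Complex.I)) i j
  rw [h θ]

lemma circInt_sum {N : ℕ} {ι : Type*} (s : Finset ι) (F : ι → ℂ → Matrix (Fin N) (Fin N) ℂ)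
    (h : ∀ k ∈ s, ∀ i j, IntervalIntegrable
      (fun θ : ℝ => F k (Complex.exp (θ * Complex.I)) i j) MeasureTheory.volume 0 (2 * Real.pi)) :
    circInt N (fun ζ => ∑ k ∈ s, F k ζ) = ∑ k ∈ s, circInt N (F k) := by
  unfold circInt
  ext i j
  simp only [Matrix.of_apply, Matrix.sum_apply]
  rw [intervalIntegral.integral_finset_sum (fun k hk => h k hk i j), Finset.smul_sum]

lemma circInt_smul_mul_left {N : ℕ} {w : ℂ → Matrix (Fin N) (Fin N) ℂ} (hw : Continuous w)
    (A : Matrix (Fin N) (Fin N) ℂ) (e : ℤ) :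
    circInt N (fun ζ => ζ ^ e • (A * w ζ)) = A * mMoment N w (-e) := by
  unfold circInt mMoment circInt
  ext i j
  simp only [Matrix.of_apply, Matrix.mul_apply, Matrix.smul_apply, smul_eq_mul, neg_neg]
  have hint : ∀ l, IntervalIntegrable
      (fun θ : ℝ => Complex.exp (θ * Complex.I) ^ e * w (Complex.exp (θ * Complex.I)) l j)
      MeasureTheory.volume 0 (2 * Real.pi) := by
    intro l
    exact (Continuous.mul (contZpow e)
      (((continuous_apply j).comp (continuous_apply l)).comp (hw.comp contCirc))).intervalIntegrable _ _
  calc (2 * Real.pi)⁻¹ • ∫ θ in (0:ℝ)..(2 * Real.pi),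
        Complex.exp (θ * Complex.I) ^ e *
          ∑ l, A i l * w (Complex.exp (θ * Complex.I)) l j
      = (2 * Real.pi)⁻¹ • ∫ θ in (0:ℝ)..(2 * Real.pi),
        ∑ l, A i l * (Complex.exp (θ * Complex.I) ^ e * w (Complex.exp (θ * Complex.I)) l j) := by
        congr 1; apply intervalIntegral.integral_congr; intro θ _
        show _ * ∑ l, _ = _
        rw [Finset.mul_sum]
        exact Finset.sum_congr rfl fun l _ => by ring
    _ = ∑ l, A i l * ((2 * Real.pi)⁻¹ • ∫ θ in (0:ℝ)..(2 * Real.pi),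
        Complex.exp (θ * Complex.I) ^ e * w (Complex.exp (θ * Complex.I)) l j) := by
        rw [intervalIntegral.integral_finset_sum (fun l _ => ((hint l).const_mul (A i l)))]
        rw [Finset.smul_sum]
        congr 1; ext l
        rw [intervalIntegral.integral_const_mul, mul_smul_comm]

lemma circInt_smul_mul_right {N : ℕ} {w : ℂ → Matrix (Fin N) (Fin N) ℂ} (hw : Continuous w)
    (A : Matrix (Fin N) (Fin N) ℂ) (e : ℤ) :
    circInt N (fun ζ => ζ ^ e • (w ζ * A)) = mMoment N w (-e) * A := by
  unfold circInt mMoment circInt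
  ext i j
  simp only [Matrix.of_apply, Matrix.mul_apply, Matrix.smul_apply, smul_eq_mul, neg_neg]
  have hint : ∀ l, IntervalIntegrable
      (fun θ : ℝ => Complex.exp (θ * Complex.I) ^ e * w (Complex.exp (θ * Complex.I)) i l)
      MeasureTheory.volume 0 (2 * Real.pi) := by
    intro l
    exact ((contZpow e).mul ((hw.comp contCirc).matrix_elem i l)).intervalIntegrable _ _
  calc (2 * Real.pi)⁻¹ • ∫ θ in (0:ℝ)..(2 * Real.pi),
        Complex.exp (θ * Complex.I) ^ e *
          ∑ l, w (Complex.exp (θ * Complex.I)) i l * A l j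
      = (2 * Real.pi)⁻¹ • ∫ θ in (0:ℝ)..(2 * Real.pi),
        ∑ l, (Complex.exp (θ * Complex.I) ^ e * w (Complex.exp (θ * Complex.I)) i l) * A l j := by
        congr 1; apply intervalIntegral.integral_congr; intro θ _
        show _ * ∑ l, _ = _
        rw [Finset.mul_sum]
        exact Finset.sum_congr rfl fun l _ => by ring
    _ = ∑ l, ((2 * Real.pi)⁻¹ • ∫ θ in (0:ℝ)..(2 * Real.pi),
        Complex.exp (θ * Complex.I) ^ e * w (Complex.exp (θ * Complex.I)) i l) * A l j := by
        rw [intervalIntegral.integral_finset_sum (fun l _ => ((hint l).mul_const (A l j)))]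
        rw [Finset.smul_sum]
        congr 1; ext l
        rw [intervalIntegral.integral_mul_const, smul_mul_assoc]

lemma intAuxL {N : ℕ} {w : ℂ → Matrix (Fin N) (Fin N) ℂ} (hw : Continuous w)
    (e : ℤ) (A : Matrix (Fin N) (Fin N) ℂ) (i j : Fin N) :
    IntervalIntegrable
      (fun θ : ℝ => (Complex.exp (θ * Complex.I) ^ e • (A * w (Complex.exp (θ * Complex.I)))) i j)
      MeasureTheory.volume 0 (2 * Real.pi) := by
  simp only [Matrix.smul_apply, smul_eq_mul]
  exact ((contZpow e).mul
    ((continuous_const.matrix_mul (hw.comp contCirc)).matrix_elem i j)).intervalIntegrable _ _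

lemma intAuxR {N : ℕ} {w : ℂ → Matrix (Fin N) (Fin N) ℂ} (hw : Continuous w)
    (e : ℤ) (A : Matrix (Fin N) (Fin N) ℂ) (i j : Fin N) :
    IntervalIntegrable
      (fun θ : ℝ => (Complex.exp (θ * Complex.I) ^ e • (w (Complex.exp (θ * Complex.I)) * A)) i j)
      MeasureTheory.volume 0 (2 * Real.pi) := by
  simp only [Matrix.smul_apply, smul_eq_mul]
  exact ((contZpow e).mul
    (((hw.comp contCirc).matrix_mul continuous_const).matrix_elem i j)).intervalIntegrable _ _

lemma starCirc (θ : ℝ) :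
    star (Complex.exp (θ * Complex.I)) = (Complex.exp (θ * Complex.I))⁻¹ := by
  have : star ((θ:ℂ) * Complex.I) = -((θ:ℂ) * Complex.I) := by
    simp [Complex.star_def, _root_.map_mul, Complex.conj_ofReal, Complex.conj_I]
  rw [Complex.star_def, ← Complex.exp_conj]
  rw [show (starRingEnd ℂ) ((θ:ℂ) * Complex.I) = -((θ:ℂ) * Complex.I) from this, Complex.exp_neg]

lemma pairL {N : ℕ} {w : ℂ → Matrix (Fin N) (Fin N) ℂ} (hw : Continuous w)
    (c : ℕ → Matrix (Fin N) (Fin N) ℂ) (n : ℕ) (j : ℤ) :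
    circInt N (fun ζ => ζ ^ (-j) • (mPolyEval c n ζ * w ζ))
      = ∑ k ∈ Finset.range (n + 1), c k * mMoment N w (j - (k : ℤ)) := by
  have h1 : circInt N (fun ζ => ζ ^ (-j) • (mPolyEval c n ζ * w ζ))
      = circInt N (fun ζ => ∑ k ∈ Finset.range (n + 1), ζ ^ ((k : ℤ) - j) • (c k * w ζ)) := by
    apply circInt_congr
    intro θ
    set ζ := Complex.exp (θ * Complex.I) with hζdef
    have hζ : ζ ≠ 0 := Complex.exp_ne_zero _
    rw [mPolyEval, Finset.sum_mul, Finset.smul_sum]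
    refine Finset.sum_congr rfl fun k _ => ?_
    rw [smul_mul_assoc, smul_smul, ← zpow_natCast ζ k, ← zpow_add₀ hζ]
    congr 2
    omega
  rw [h1, circInt_sum (Finset.range (n + 1))
    (fun k ζ => ζ ^ ((k : ℤ) - j) • (c k * w ζ))
    (fun k _ i j' => intAuxL hw ((k : ℤ) - j) (c k) i j')]
  refine Finset.sum_congr rfl fun k _ => ?_
  rw [circInt_smul_mul_left hw, neg_sub]

lemma pairR {N : ℕ} {w : ℂ → Matrix (Fin N) (Fin N) ℂ} (hw : Continuous w)
    (c : ℕ → Matrix (Fin N) (Fin N) ℂ) (n : ℕ) (j : ℤ) :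
    circInt N (fun ζ => ζ ^ (-j) • (w ζ * mPolyEval c n ζ))
      = ∑ k ∈ Finset.range (n + 1), mMoment N w (j - (k : ℤ)) * c k := by
  have h1 : circInt N (fun ζ => ζ ^ (-j) • (w ζ * mPolyEval c n ζ))
      = circInt N (fun ζ => ∑ k ∈ Finset.range (n + 1), ζ ^ ((k : ℤ) - j) • (w ζ * c k)) := by
    apply circInt_congr
    intro θ
    set ζ := Complex.exp (θ * Complex.I) with hζdef
    have hζ : ζ ≠ 0 := Complex.exp_ne_zero _
    rw [mPolyEval, Finset.mul_sum, Finset.smul_sum]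
    refine Finset.sum_congr rfl fun k _ => ?_
    rw [mul_smul_comm, smul_smul, ← zpow_natCast ζ k, ← zpow_add₀ hζ]
    congr 2
    omega
  rw [h1, circInt_sum (Finset.range (n + 1))
    (fun k ζ => ζ ^ ((k : ℤ) - j) • (w ζ * c k))
    (fun k _ i j' => intAuxR hw ((k : ℤ) - j) (c k) i j')]
  refine Finset.sum_congr rfl fun k _ => ?_
  rw [circInt_smul_mul_right hw, neg_sub]

lemma pairR2 {N : ℕ} {w : ℂ → Matrix (Fin N) (Fin N) ℂ} (hw : Continuous w)
    (c : ℕ → Matrix (Fin N) (Fin N) ℂ) (n : ℕ) (j : ℕ) :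
    circInt N (fun ζ => ζ ^ j • ((mPolyEval c n ζ)ᴴ * w ζ))
      = ∑ k ∈ Finset.range (n + 1), (c k)ᴴ * mMoment N w ((k : ℤ) - (j : ℤ)) := by
  have h1 : circInt N (fun ζ => ζ ^ j • ((mPolyEval c n ζ)ᴴ * w ζ))
      = circInt N (fun ζ => ∑ k ∈ Finset.range (n + 1),
          ζ ^ ((j : ℤ) - (k : ℤ)) • ((c k)ᴴ * w ζ)) := by
    apply circInt_congr
    intro θ
    set ζ := Complex.exp (θ * Complex.I) with hζdef
    have hζ : ζ ≠ 0 := Complex.exp_ne_zero _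
    have hstar : star ζ = ζ⁻¹ := starCirc θ
    rw [mPolyEval, Matrix.conjTranspose_sum, Finset.sum_mul, Finset.smul_sum]
    refine Finset.sum_congr rfl fun k _ => ?_
    rw [Matrix.conjTranspose_smul, smul_mul_assoc, smul_smul]
    have : star (ζ ^ k) = ζ ^ (-(k : ℤ)) := by
      rw [star_pow, hstar, ← zpow_natCast ζ⁻¹ k, _root_.inv_zpow']
    rw [this, ← zpow_natCast ζ j, ← zpow_add₀ hζ]
    congr 2
  rw [h1, circInt_sum (Finset.range (n + 1))
    (fun k ζ => ζ ^ ((j : ℤ) - (k : ℤ)) • ((c k)ᴴ * w ζ))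
    (fun k _ i j' => intAuxL hw ((j : ℤ) - (k : ℤ)) ((c k)ᴴ) i j')]
  refine Finset.sum_congr rfl fun k _ => ?_
  rw [circInt_smul_mul_left hw, neg_sub]

abbrev MM (N : ℕ) := Matrix (Fin N) (Fin N) ℂ

lemma eq_zero_of_mul_unit {m : ℕ} (E : Matrix (Fin N) (Fin m × Fin N) ℂ)
    (M : Matrix (Fin m × Fin N) (Fin m × Fin N) ℂ) (hM : IsUnit M) (h : E * M = 0) :
    E = 0 := by
  have hdet : IsUnit M.det := (Matrix.isUnit_iff_isUnit_det M).mp hM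
  calc E = E * (M * M⁻¹) := by rw [Matrix.mul_nonsing_inv _ hdet, Matrix.mul_one]
    _ = (E * M) * M⁻¹ := by rw [Matrix.mul_assoc]
    _ = 0 := by rw [h, Matrix.zero_mul]

lemma recursion_a (m : ℕ) (μ : ℤ → MM N) (a a' c' : ℕ → MM N)
    (han : a (m + 1) = 1) (ha'm : a' m = 1) (hc'm : c' m = 1)
    (H1 : ∀ j : ℕ, j < m + 1 → ∑ k ∈ Finset.range (m + 2), a k * μ ((j : ℤ) - (k : ℤ)) = 0)
    (H1' : ∀ j : ℕ, j < m → ∑ k ∈ Finset.range (m + 1), a' k * μ ((j : ℤ) - (k : ℤ)) = 0)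
    (H3' : ∀ j : ℕ, j < m → ∑ k ∈ Finset.range (m + 1), (c' k)ᴴ * μ ((k : ℤ) - (j : ℤ)) = 0)
    (hMR : IsUnit (Matrix.of fun p q : Fin m × Fin N => μ ((q.1 : ℤ) - (p.1 : ℤ)) p.2 q.2)) :
    ∀ k ≤ m + 1, a k = (if k = 0 then 0 else a' (k - 1)) +
      a 0 * (if k = m + 1 then 0 else (c' (m - k))ᴴ) := by
  set α := a 0 with hα
  set d : ℕ → MM N := fun k => a k - ((if k = 0 then 0 else a' (k - 1)) +
      α * (if k = m + 1 then 0 else (c' (m - k))ᴴ)) with hd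
  have hd0 : d 0 = 0 := by
    simp [hd, hc'm, hα, (by omega : ¬ (0 = m + 1))]
  have hdn : d (m + 1) = 0 := by
    simp [hd, ha'm, han]
  have hdj : ∀ j : ℕ, 1 ≤ j → j ≤ m →
      ∑ k ∈ Finset.range (m + 2), d k * μ ((j : ℤ) - (k : ℤ)) = 0 := by
    intro j hj1 hjm
    have e1 : ∑ k ∈ Finset.range (m + 2),
        (if k = 0 then (0 : MM N) else a' (k - 1)) * μ ((j : ℤ) - (k : ℤ)) = 0 := by
      rw [Finset.sum_range_succ']
      rw [Finset.sum_congr rfl (fun i (hi : i ∈ Finset.range (m + 1)) =>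
        show (if i + 1 = 0 then (0 : MM N) else a' (i + 1 - 1)) * μ ((j : ℤ) - ((i + 1 : ℕ) : ℤ))
            = a' i * μ (((j - 1 : ℕ) : ℤ) - (i : ℤ)) from by
          rw [if_neg (Nat.succ_ne_zero i), Nat.add_sub_cancel,
            show ((j : ℤ) - ((i + 1 : ℕ) : ℤ)) = (((j - 1 : ℕ) : ℤ) - (i : ℤ)) from by omega])]
      rw [H1' (j - 1) (by omega)]
      simp
    have e2 : ∑ k ∈ Finset.range (m + 2),
        (if k = m + 1 then (0 : MM N) else (c' (m - k))ᴴ) * μ ((j : ℤ) - (k : ℤ)) = 0 := by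
      rw [Finset.sum_range_succ]
      rw [← Finset.sum_range_reflect
        (fun k => (if k = m + 1 then (0 : MM N) else (c' (m - k))ᴴ) * μ ((j : ℤ) - (k : ℤ)))
        (m + 1)]
      rw [Finset.sum_congr rfl (fun i (hi : i ∈ Finset.range (m + 1)) =>
        show (if (m + 1 - 1 - i) = m + 1 then (0 : MM N) else (c' (m - (m + 1 - 1 - i)))ᴴ) *
            μ ((j : ℤ) - ((m + 1 - 1 - i : ℕ) : ℤ))
            = (c' i)ᴴ * μ ((i : ℤ) - ((m - j : ℕ) : ℤ)) from by
          rw [Finset.mem_range] at hi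
          rw [if_neg (by omega),
            show m - (m + 1 - 1 - i) = i from by omega,
            show ((j : ℤ) - ((m + 1 - 1 - i : ℕ) : ℤ)) = ((i : ℤ) - ((m - j : ℕ) : ℤ)) from by
              omega])]
      rw [H3' (m - j) (by omega)]
      simp
    have e3 : ∑ k ∈ Finset.range (m + 2), d k * μ ((j : ℤ) - (k : ℤ)) =
        ∑ k ∈ Finset.range (m + 2), a k * μ ((j : ℤ) - (k : ℤ)) -
        (∑ k ∈ Finset.range (m + 2),
          (if k = 0 then (0 : MM N) else a' (k - 1)) * μ ((j : ℤ) - (k : ℤ)) +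
         α * ∑ k ∈ Finset.range (m + 2),
          (if k = m + 1 then (0 : MM N) else (c' (m - k))ᴴ) * μ ((j : ℤ) - (k : ℤ))) := by
      rw [Finset.mul_sum, ← Finset.sum_add_distrib, ← Finset.sum_sub_distrib]
      refine Finset.sum_congr rfl fun k _ => ?_
      simp only [hd, Matrix.sub_mul, Matrix.add_mul, Matrix.mul_assoc]
    rw [e3, e1, e2, H1 j (by omega), mul_zero, add_zero, sub_zero]
  set E : Matrix (Fin N) (Fin m × Fin N) ℂ := Matrix.of (fun i p => d (p.1 + 1) i p.2) with hE
  have hEM : E * (Matrix.of fun p q : Fin m × Fin N => μ ((q.1 : ℤ) - (p.1 : ℤ)) p.2 q.2) = 0 := by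
    ext i jq
    obtain ⟨j, q⟩ := jq
    have hj := j.isLt
    simp only [Matrix.mul_apply, Matrix.zero_apply, Matrix.of_apply, hE]
    rw [Fintype.sum_prod_type]
    have key : ∑ l ∈ Finset.range m, d (l + 1) * μ (((j : ℕ) : ℤ) - (l : ℤ)) = 0 := by
      have h := hdj ((j : ℕ) + 1) (by omega) (by omega)
      rw [Finset.sum_range_succ'] at h
      rw [hd0] at h
      simp only [Matrix.zero_mul, add_zero] at h
      rw [Finset.sum_range_succ, hdn] at h
      simp only [Matrix.zero_mul, add_zero] at h
      rw [← h]
      refine Finset.sum_congr rfl fun l _ => ?_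
      rw [show (((j : ℕ) : ℤ) - (l : ℤ)) = ((((j : ℕ) + 1 : ℕ) : ℤ) - ((l + 1 : ℕ) : ℤ)) from by
        push_cast; ring]
    rw [← Fin.sum_univ_eq_sum_range
      (fun l => d (l + 1) * μ (((j : ℕ) : ℤ) - (l : ℤ))) m] at key
    have := congrArg (fun (X : MM N) => X i q) key
    simp only [Matrix.sum_apply, Matrix.zero_apply] at this
    rw [← this]
    refine Finset.sum_congr rfl fun l _ => ?_
    rw [Matrix.mul_apply]
  have hE0 : E = 0 := eq_zero_of_mul_unit E _ hMR hEM
  have hdall : ∀ k ≤ m + 1, d k = 0 := by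
    intro k hk
    rcases Nat.eq_zero_or_pos k with h0 | hpos
    · rw [h0, hd0]
    rcases eq_or_lt_of_le hk with he | hlt
    · rw [he, hdn]
    · obtain ⟨l, rfl⟩ : ∃ l, k = l + 1 := ⟨k - 1, by omega⟩
      have hl : l < m := by omega
      ext i p
      have := congrArg (fun (X : Matrix (Fin N) (Fin m × Fin N) ℂ) => X i (⟨l, hl⟩, p)) hE0
      simpa [hE] using this
  intro k hk
  have := hdall k hk
  rw [hd] at this
  simpa [sub_eq_zero] using this

lemma recursion_c (m : ℕ) (μ : ℤ → MM N) (c c' a' : ℕ → MM N)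
    (hcn : c (m + 1) = 1) (hc'm : c' m = 1) (ha'm : a' m = 1)
    (H3 : ∀ j : ℕ, j < m + 1 → ∑ k ∈ Finset.range (m + 2), (c k)ᴴ * μ ((k : ℤ) - (j : ℤ)) = 0)
    (H3' : ∀ j : ℕ, j < m → ∑ k ∈ Finset.range (m + 1), (c' k)ᴴ * μ ((k : ℤ) - (j : ℤ)) = 0)
    (H1' : ∀ j : ℕ, j < m → ∑ k ∈ Finset.range (m + 1), a' k * μ ((j : ℤ) - (k : ℤ)) = 0)
    (hML : IsUnit (Matrix.of fun p q : Fin m × Fin N => μ ((p.1 : ℤ) - (q.1 : ℤ)) p.2 q.2)) :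
    ∀ k ≤ m + 1, (c k)ᴴ = (if k = 0 then 0 else (c' (k - 1))ᴴ) +
      (c 0)ᴴ * (if k = m + 1 then 0 else a' (m - k)) := by
  set β := (c 0)ᴴ with hβ
  set d : ℕ → MM N := fun k => (c k)ᴴ - ((if k = 0 then 0 else (c' (k - 1))ᴴ) +
      β * (if k = m + 1 then 0 else a' (m - k))) with hd
  have hd0 : d 0 = 0 := by
    simp [hd, ha'm, hβ, (by omega : ¬ (0 = m + 1))]
  have hdn : d (m + 1) = 0 := by
    simp [hd, hc'm, hcn]
  have hdj : ∀ j : ℕ, 1 ≤ j → j ≤ m →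
      ∑ k ∈ Finset.range (m + 2), d k * μ ((k : ℤ) - (j : ℤ)) = 0 := by
    intro j hj1 hjm
    have e1 : ∑ k ∈ Finset.range (m + 2),
        (if k = 0 then (0 : MM N) else (c' (k - 1))ᴴ) * μ ((k : ℤ) - (j : ℤ)) = 0 := by
      rw [Finset.sum_range_succ']
      rw [Finset.sum_congr rfl (fun i (hi : i ∈ Finset.range (m + 1)) =>
        show (if i + 1 = 0 then (0 : MM N) else (c' (i + 1 - 1))ᴴ) * μ (((i + 1 : ℕ) : ℤ) - (j : ℤ))
            = (c' i)ᴴ * μ ((i : ℤ) - ((j - 1 : ℕ) : ℤ)) from by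
          rw [if_neg (Nat.succ_ne_zero i), Nat.add_sub_cancel,
            show (((i + 1 : ℕ) : ℤ) - (j : ℤ)) = ((i : ℤ) - ((j - 1 : ℕ) : ℤ)) from by omega])]
      rw [H3' (j - 1) (by omega)]
      simp
    have e2 : ∑ k ∈ Finset.range (m + 2),
        (if k = m + 1 then (0 : MM N) else a' (m - k)) * μ ((k : ℤ) - (j : ℤ)) = 0 := by
      rw [Finset.sum_range_succ]
      rw [← Finset.sum_range_reflect
        (fun k => (if k = m + 1 then (0 : MM N) else a' (m - k)) * μ ((k : ℤ) - (j : ℤ)))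
        (m + 1)]
      rw [Finset.sum_congr rfl (fun i (hi : i ∈ Finset.range (m + 1)) =>
        show (if (m + 1 - 1 - i) = m + 1 then (0 : MM N) else a' (m - (m + 1 - 1 - i))) *
            μ (((m + 1 - 1 - i : ℕ) : ℤ) - (j : ℤ))
            = a' i * μ (((m - j : ℕ) : ℤ) - (i : ℤ)) from by
          rw [Finset.mem_range] at hi
          rw [if_neg (by omega),
            show m - (m + 1 - 1 - i) = i from by omega,
            show (((m + 1 - 1 - i : ℕ) : ℤ) - (j : ℤ)) = (((m - j : ℕ) : ℤ) - (i : ℤ)) from by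
              omega])]
      rw [H1' (m - j) (by omega)]
      simp
    have e3 : ∑ k ∈ Finset.range (m + 2), d k * μ ((k : ℤ) - (j : ℤ)) =
        ∑ k ∈ Finset.range (m + 2), (c k)ᴴ * μ ((k : ℤ) - (j : ℤ)) -
        (∑ k ∈ Finset.range (m + 2),
          (if k = 0 then (0 : MM N) else (c' (k - 1))ᴴ) * μ ((k : ℤ) - (j : ℤ)) +
         β * ∑ k ∈ Finset.range (m + 2),
          (if k = m + 1 then (0 : MM N) else a' (m - k)) * μ ((k : ℤ) - (j : ℤ))) := by
      rw [Finset.mul_sum, ← Finset.sum_add_distrib, ← Finset.sum_sub_distrib]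
      refine Finset.sum_congr rfl fun k _ => ?_
      simp only [hd, Matrix.sub_mul, Matrix.add_mul, Matrix.mul_assoc]
    rw [e3, e1, e2, H3 j (by omega), mul_zero, add_zero, sub_zero]
  set E : Matrix (Fin N) (Fin m × Fin N) ℂ := Matrix.of (fun i p => d (p.1 + 1) i p.2) with hE
  have hEM : E * (Matrix.of fun p q : Fin m × Fin N => μ ((p.1 : ℤ) - (q.1 : ℤ)) p.2 q.2) = 0 := by
    ext i jq
    obtain ⟨j, q⟩ := jq
    have hj := j.isLt
    simp only [Matrix.mul_apply, Matrix.zero_apply, Matrix.of_apply, hE]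
    rw [Fintype.sum_prod_type]
    have key : ∑ l ∈ Finset.range m, d (l + 1) * μ ((l : ℤ) - ((j : ℕ) : ℤ)) = 0 := by
      have h := hdj ((j : ℕ) + 1) (by omega) (by omega)
      rw [Finset.sum_range_succ'] at h
      rw [hd0] at h
      simp only [Matrix.zero_mul, add_zero] at h
      rw [Finset.sum_range_succ, hdn] at h
      simp only [Matrix.zero_mul, add_zero] at h
      rw [← h]
      refine Finset.sum_congr rfl fun l _ => ?_
      rw [show ((l : ℤ) - ((j : ℕ) : ℤ)) = (((l + 1 : ℕ) : ℤ) - (((j : ℕ) + 1 : ℕ) : ℤ)) from by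
        push_cast; ring]
    rw [← Fin.sum_univ_eq_sum_range
      (fun l => d (l + 1) * μ ((l : ℤ) - ((j : ℕ) : ℤ))) m] at key
    have := congrArg (fun (X : MM N) => X i q) key
    simp only [Matrix.sum_apply, Matrix.zero_apply] at this
    rw [← this]
    refine Finset.sum_congr rfl fun l _ => ?_
    rw [Matrix.mul_apply]
  have hE0 : E = 0 := eq_zero_of_mul_unit E _ hML hEM
  have hdall : ∀ k ≤ m + 1, d k = 0 := by
    intro k hk
    rcases Nat.eq_zero_or_pos k with h0 | hpos
    · rw [h0, hd0]
    rcases eq_or_lt_of_le hk with he | hlt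
    · rw [he, hdn]
    · obtain ⟨l, rfl⟩ : ∃ l, k = l + 1 := ⟨k - 1, by omega⟩
      have hl : l < m := by omega
      ext i p
      have := congrArg (fun (X : Matrix (Fin N) (Fin m × Fin N) ℂ) => X i (⟨l, hl⟩, p)) hE0
      simpa [hE] using this
  intro k hk
  have := hdall k hk
  rw [hd] at this
  simpa [sub_eq_zero] using this

/-- `H^R_m = ∑ μ(m-k) b_k = ∑ (c_k)ᴴ μ(k-m)` via the double sum. -/
lemma HR_eq_K (m : ℕ) (μ : ℤ → MM N) (b c : ℕ → MM N)
    (hbm : b m = 1) (hcm : c m = 1)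
    (H2 : ∀ j : ℕ, j < m → ∑ k ∈ Finset.range (m + 1), μ ((j : ℤ) - (k : ℤ)) * b k = 0)
    (H3 : ∀ j : ℕ, j < m → ∑ k ∈ Finset.range (m + 1), (c k)ᴴ * μ ((k : ℤ) - (j : ℤ)) = 0) :
    ∑ k ∈ Finset.range (m + 1), μ ((m : ℤ) - (k : ℤ)) * b k =
    ∑ k ∈ Finset.range (m + 1), (c k)ᴴ * μ ((k : ℤ) - (m : ℤ)) := by
  have key : ∑ j ∈ Finset.range (m + 1), ∑ k ∈ Finset.range (m + 1),
      (c j)ᴴ * (μ ((j : ℤ) - (k : ℤ)) * b k) =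
      ∑ k ∈ Finset.range (m + 1), ∑ j ∈ Finset.range (m + 1),
      ((c j)ᴴ * μ ((j : ℤ) - (k : ℤ))) * b k := by
    rw [Finset.sum_comm]
    exact Finset.sum_congr rfl fun k _ => Finset.sum_congr rfl fun j _ => by
      rw [Matrix.mul_assoc]
  have lhs : ∑ j ∈ Finset.range (m + 1), ∑ k ∈ Finset.range (m + 1),
      (c j)ᴴ * (μ ((j : ℤ) - (k : ℤ)) * b k) =
      ∑ k ∈ Finset.range (m + 1), μ ((m : ℤ) - (k : ℤ)) * b k := by
    rw [Finset.sum_eq_single m]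
    · rw [hcm, Matrix.conjTranspose_one, ← Finset.mul_sum, Matrix.one_mul]
    · intro j hj hne
      rw [Finset.mem_range] at hj
      rw [← Finset.mul_sum, H2 j (by omega), mul_zero]
    · intro h
      exact absurd (Finset.self_mem_range_succ m) h
  have rhs : ∑ k ∈ Finset.range (m + 1), ∑ j ∈ Finset.range (m + 1),
      ((c j)ᴴ * μ ((j : ℤ) - (k : ℤ))) * b k =
      ∑ k ∈ Finset.range (m + 1), (c k)ᴴ * μ ((k : ℤ) - (m : ℤ)) := by
    rw [Finset.sum_eq_single m]
    · rw [hbm]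
      simp
    · intro k hk hne
      rw [Finset.mem_range] at hk
      rw [← Finset.sum_mul, H3 k (by omega), Matrix.zero_mul]
    · intro h
      exact absurd (Finset.self_mem_range_succ m) h
  rw [← lhs, key, rhs]

/-- Invertibility of `H^L_m` from invertibility of `M^R_[m+1]`. -/
lemma HL_unit (m : ℕ) (μ : ℤ → MM N) (a : ℕ → MM N) (ham : a m = 1)
    (H : ∀ j : ℕ, j < m → ∑ k ∈ Finset.range (m + 1), a k * μ ((j : ℤ) - (k : ℤ)) = 0)
    (hMR : IsUnit (Matrix.of fun p q : Fin (m + 1) × Fin N =>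
      μ ((q.1 : ℤ) - (p.1 : ℤ)) p.2 q.2)) :
    IsUnit (∑ k ∈ Finset.range (m + 1), a k * μ ((m : ℤ) - (k : ℤ))) := by
  set Hm := ∑ k ∈ Finset.range (m + 1), a k * μ ((m : ℤ) - (k : ℤ)) with hHm
  set M : Matrix (Fin (m + 1) × Fin N) (Fin (m + 1) × Fin N) ℂ :=
    Matrix.of fun p q => μ ((q.1 : ℤ) - (p.1 : ℤ)) p.2 q.2 with hM
  have hdet : IsUnit M.det := (Matrix.isUnit_iff_isUnit_det M).mp hMR
  set A : Matrix (Fin N) (Fin (m + 1) × Fin N) ℂ := Matrix.of (fun i p => a p.1 i p.2) with hA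
  set T : Matrix (Fin N) (Fin (m + 1) × Fin N) ℂ :=
    Matrix.of (fun i p => if (p.1 : ℕ) = m then Hm i p.2 else 0) with hT
  have hAM : A * M = T := by
    ext i jq
    obtain ⟨j, q⟩ := jq
    have hj := j.isLt
    simp only [Matrix.mul_apply, Matrix.of_apply, hA, hM, hT]
    rw [Fintype.sum_prod_type]
    have step : ∀ X : MM N,
        (∑ k ∈ Finset.range (m + 1), a k * μ (((j : ℕ) : ℤ) - (k : ℤ))) = X →
        (∑ l : Fin (m + 1), ∑ p : Fin N, a l i p * μ (((j : ℕ) : ℤ) - ((l : ℕ) : ℤ)) p q)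
          = X i q := by
      intro X hX
      rw [← hX, ← Fin.sum_univ_eq_sum_range
        (fun k => a k * μ (((j : ℕ) : ℤ) - (k : ℤ))) (m + 1), Matrix.sum_apply]
      exact Finset.sum_congr rfl fun l _ => (Matrix.mul_apply).symm
    by_cases hjm : (j : ℕ) = m
    · rw [if_pos hjm]
      exact step Hm (by rw [hHm, hjm])
    · rw [if_neg hjm]
      have := step 0 (H (j : ℕ) (by omega))
      simpa using this
  set X : MM N := Matrix.of (fun p q => M⁻¹ (Fin.last m, p) (Fin.last m, q)) with hX
  have hright : Hm * X = 1 := by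
    have hA2 : A = T * M⁻¹ := by
      rw [← hAM, Matrix.mul_assoc, Matrix.mul_nonsing_inv _ hdet, Matrix.mul_one]
    ext i q
    have := congrArg (fun (Y : Matrix (Fin N) (Fin (m + 1) × Fin N) ℂ) =>
      Y i (Fin.last m, q)) hA2
    simp only [hA, Matrix.of_apply] at this
    rw [show a ((Fin.last m : Fin (m+1)) : ℕ) i q = (1 : MM N) i q from by
      rw [Fin.val_last, ham]] at this
    rw [Matrix.mul_apply, this, Matrix.mul_apply]
    rw [Fintype.sum_prod_type]
    rw [Finset.sum_eq_single (Fin.last m)]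
    · simp [hT, hX]
    · intro l _ hne
      have : ¬ ((l : ℕ) = m) := fun h => hne (Fin.ext (by simp [h, Fin.val_last]))
      simp only [hT, Matrix.of_apply, if_neg this]
      simp
    · intro h
      exact absurd (Finset.mem_univ _) h
  exact (Matrix.isUnit_iff_isUnit_det _).mpr (Matrix.isUnit_det_of_right_inverse hright)

/-- Invertibility of `H^R_m` from invertibility of `M^L_[m+1]`. -/
lemma HR_unit (m : ℕ) (μ : ℤ → MM N) (b : ℕ → MM N) (hbm : b m = 1)
    (H : ∀ j : ℕ, j < m → ∑ k ∈ Finset.range (m + 1), μ ((j : ℤ) - (k : ℤ)) * b k = 0)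
    (hML : IsUnit (Matrix.of fun p q : Fin (m + 1) × Fin N =>
      μ ((p.1 : ℤ) - (q.1 : ℤ)) p.2 q.2)) :
    IsUnit (∑ k ∈ Finset.range (m + 1), μ ((m : ℤ) - (k : ℤ)) * b k) := by
  set Hm := ∑ k ∈ Finset.range (m + 1), μ ((m : ℤ) - (k : ℤ)) * b k with hHm
  set M : Matrix (Fin (m + 1) × Fin N) (Fin (m + 1) × Fin N) ℂ :=
    Matrix.of fun p q => μ ((p.1 : ℤ) - (q.1 : ℤ)) p.2 q.2 with hM
  have hdet : IsUnit M.det := (Matrix.isUnit_iff_isUnit_det M).mp hML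
  set B : Matrix (Fin (m + 1) × Fin N) (Fin N) ℂ := Matrix.of (fun p j => b p.1 p.2 j) with hB
  set T : Matrix (Fin (m + 1) × Fin N) (Fin N) ℂ :=
    Matrix.of (fun p j => if (p.1 : ℕ) = m then Hm p.2 j else 0) with hT
  have hMB : M * B = T := by
    ext jq i
    obtain ⟨j, q⟩ := jq
    have hj := j.isLt
    simp only [Matrix.mul_apply, Matrix.of_apply, hB, hM, hT]
    rw [Fintype.sum_prod_type]
    have step : ∀ X : MM N,
        (∑ k ∈ Finset.range (m + 1), μ (((j : ℕ) : ℤ) - (k : ℤ)) * b k) = X →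
        (∑ l : Fin (m + 1), ∑ p : Fin N, μ (((j : ℕ) : ℤ) - ((l : ℕ) : ℤ)) q p * b l p i)
          = X q i := by
      intro X hX
      rw [← hX, ← Fin.sum_univ_eq_sum_range
        (fun k => μ (((j : ℕ) : ℤ) - (k : ℤ)) * b k) (m + 1), Matrix.sum_apply]
      exact Finset.sum_congr rfl fun l _ => (Matrix.mul_apply).symm
    by_cases hjm : (j : ℕ) = m
    · rw [if_pos hjm]
      exact step Hm (by rw [hHm, hjm])
    · rw [if_neg hjm]
      have := step 0 (H (j : ℕ) (by omega))
      simpa using this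
  set X : MM N := Matrix.of (fun p q => M⁻¹ (Fin.last m, p) (Fin.last m, q)) with hX
  have hleft : X * Hm = 1 := by
    have hB2 : B = M⁻¹ * T := by
      rw [← hMB, ← Matrix.mul_assoc, Matrix.nonsing_inv_mul _ hdet, Matrix.one_mul]
    ext q i
    have := congrArg (fun (Y : Matrix (Fin (m + 1) × Fin N) (Fin N) ℂ) =>
      Y (Fin.last m, q) i) hB2
    simp only [hB, Matrix.of_apply] at this
    rw [show b ((Fin.last m : Fin (m+1)) : ℕ) q i = (1 : MM N) q i from by
      rw [Fin.val_last, hbm]] at this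
    rw [Matrix.mul_apply, this, Matrix.mul_apply]
    rw [Fintype.sum_prod_type]
    rw [Finset.sum_eq_single (Fin.last m)]
    · simp [hT, hX]
    · intro l _ hne
      have : ¬ ((l : ℕ) = m) := fun h => hne (Fin.ext (by simp [h, Fin.val_last]))
      simp only [hT, Matrix.of_apply, if_neg this]
      simp
    · intro h
      exact absurd (Finset.mem_univ _) h
  exact (Matrix.isUnit_iff_isUnit_det _).mpr (Matrix.isUnit_det_of_left_inverse hleft)


lemma szVer_eq {N : ℕ} (P : ℕ → ℕ → Matrix (Fin N) (Fin N) ℂ) (n : ℕ) :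
    szVer P n = P n 0 := by
  unfold szVer mPolyEval
  rw [Finset.sum_eq_single 0]
  · simp
  · intro k _ hk
    rw [zero_pow hk, zero_smul]
  · intro h
    exact absurd (Finset.mem_range.mpr (by omega)) h

lemma sum_arg_congr {N : ℕ} (s : Finset ℕ) (f : ℕ → MM N) (μ : ℤ → MM N) (g h : ℕ → ℤ)
    (he : ∀ i ∈ s, g i = h i) :
    ∑ i ∈ s, f i * μ (g i) = ∑ i ∈ s, f i * μ (h i) :=
  Finset.sum_congr rfl fun i hi => by rw [he i hi]

lemma sum_split {N : ℕ} (m : ℕ) (μ : ℤ → MM N) (u v : ℕ → MM N) (B : MM N) (g : ℕ → ℤ) :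
    ∑ k ∈ Finset.range (m + 2),
      ((if k = 0 then 0 else u (k - 1)) + B * (if k = m + 1 then 0 else v (m - k))) * μ (g k)
    = (∑ i ∈ Finset.range (m + 1), u i * μ (g (i + 1))) +
      B * ∑ i ∈ Finset.range (m + 1), v i * μ (g (m - i)) := by
  have h1 : ∑ k ∈ Finset.range (m + 2), (if k = 0 then (0 : MM N) else u (k - 1)) * μ (g k)
      = ∑ i ∈ Finset.range (m + 1), u i * μ (g (i + 1)) := by
    rw [Finset.sum_range_succ']
    simp only [if_neg (Nat.succ_ne_zero _), Nat.add_sub_cancel]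
    simp
  have h2 : ∑ k ∈ Finset.range (m + 2), (if k = m + 1 then (0 : MM N) else v (m - k)) * μ (g k)
      = ∑ i ∈ Finset.range (m + 1), v i * μ (g (m - i)) := by
    rw [Finset.sum_range_succ]
    rw [← Finset.sum_range_reflect
      (fun k => (if k = m + 1 then (0 : MM N) else v (m - k)) * μ (g k)) (m + 1)]
    rw [Finset.sum_congr rfl (fun i (hi : i ∈ Finset.range (m + 1)) =>
      show (if (m + 1 - 1 - i) = m + 1 then (0 : MM N) else v (m - (m + 1 - 1 - i))) *
          μ (g (m + 1 - 1 - i)) = v i * μ (g (m - i)) from by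
        rw [Finset.mem_range] at hi
        rw [if_neg (by omega), show m - (m + 1 - 1 - i) = i from by omega,
          show m + 1 - 1 - i = m - i from by omega])]
    simp
  calc ∑ k ∈ Finset.range (m + 2),
      ((if k = 0 then 0 else u (k - 1)) + B * (if k = m + 1 then 0 else v (m - k))) * μ (g k)
      = ∑ k ∈ Finset.range (m + 2),
        ((if k = 0 then (0 : MM N) else u (k - 1)) * μ (g k) +
          B * ((if k = m + 1 then (0 : MM N) else v (m - k)) * μ (g k))) := by
        refine Finset.sum_congr rfl fun k _ => ?_
        rw [Matrix.add_mul, Matrix.mul_assoc]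
    _ = _ := by
        rw [Finset.sum_add_distrib, h1, ← Finset.mul_sum, h2]

/-- ratios of consecutive quasi-tau matrices in terms of Verblunsky
matrices, and the resulting invertibility. -/
theorem statement7 {N : ℕ} (hN : 1 ≤ N) (w : ℂ → Matrix (Fin N) (Fin N) ℂ)
    (hw : Continuous w) (hqd : QuasiDef N w)
    (PL1 PR1 PR2 : ℕ → ℕ → Matrix (Fin N) (Fin N) ℂ)
    (hPL1 : IsSzPL1 N w PL1) (hPR1 : IsSzPR1 N w PR1) (hPR2 : IsSzPR2 N w PR2) :
    ∀ n : ℕ, 1 ≤ n →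
      szHR N w PR1 n * (szHR N w PR1 (n - 1))⁻¹ = 1 - (szVer PR2 n)ᴴ * szVer PL1 n ∧
      szHL N w PL1 n * (szHL N w PL1 (n - 1))⁻¹ = 1 - szVer PL1 n * (szVer PR2 n)ᴴ ∧
      IsUnit (1 - (szVer PR2 n)ᴴ * szVer PL1 n) ∧
      IsUnit (1 - szVer PL1 n * (szVer PR2 n)ᴴ) := by
  intro n hn
  obtain ⟨m, rfl⟩ : ∃ m, n = m + 1 := ⟨n - 1, by omega⟩
  simp only [Nat.add_sub_cancel]
  obtain ⟨haM, haV, haO⟩ := hPL1 (m + 1)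
  obtain ⟨ha'M, ha'V, ha'O⟩ := hPL1 m
  obtain ⟨hbM, hbV, hbO⟩ := hPR1 (m + 1)
  obtain ⟨hb'M, hb'V, hb'O⟩ := hPR1 m
  obtain ⟨hcM, hcV, hcO⟩ := hPR2 (m + 1)
  obtain ⟨hc'M, hc'V, hc'O⟩ := hPR2 m
  set μ : ℤ → MM N := mMoment N w with hμ
  have hq : ∀ s : ℕ,
      IsUnit (Matrix.of fun p q : Fin s × Fin N => μ ((p.1 : ℤ) - (q.1 : ℤ)) p.2 q.2) ∧
      IsUnit (Matrix.of fun p q : Fin s × Fin N => μ ((q.1 : ℤ) - (p.1 : ℤ)) p.2 q.2) := by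
    intro s
    rcases Nat.eq_zero_or_pos s with rfl | hs
    · constructor <;>
        exact (Matrix.isUnit_iff_isUnit_det _).mpr
          (by rw [Matrix.det_isEmpty]; exact isUnit_one)
    · exact hqd s hs
  have H1 : ∀ j : ℕ, j < m + 1 →
      ∑ k ∈ Finset.range (m + 2), PL1 (m + 1) k * μ ((j : ℤ) - (k : ℤ)) = 0 := by
    intro j hj
    have h := haO j hj
    rwa [pairL hw] at h
  have H1' : ∀ j : ℕ, j < m →
      ∑ k ∈ Finset.range (m + 1), PL1 m k * μ ((j : ℤ) - (k : ℤ)) = 0 := by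
    intro j hj
    have h := ha'O j hj
    rwa [pairL hw] at h
  have H2 : ∀ j : ℕ, j < m + 1 →
      ∑ k ∈ Finset.range (m + 2), μ ((j : ℤ) - (k : ℤ)) * PR1 (m + 1) k = 0 := by
    intro j hj
    have h := hbO j hj
    rwa [pairR hw] at h
  have H2' : ∀ j : ℕ, j < m →
      ∑ k ∈ Finset.range (m + 1), μ ((j : ℤ) - (k : ℤ)) * PR1 m k = 0 := by
    intro j hj
    have h := hb'O j hj
    rwa [pairR hw] at h
  have H3 : ∀ j : ℕ, j < m + 1 →
      ∑ k ∈ Finset.range (m + 2), (PR2 (m + 1) k)ᴴ * μ ((k : ℤ) - (j : ℤ)) = 0 := by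
    intro j hj
    have h := hcO j hj
    rwa [pairR2 hw] at h
  have H3' : ∀ j : ℕ, j < m →
      ∑ k ∈ Finset.range (m + 1), (PR2 m k)ᴴ * μ ((k : ℤ) - (j : ℤ)) = 0 := by
    intro j hj
    have h := hc'O j hj
    rwa [pairR2 hw] at h
  have recA := recursion_a m μ (PL1 (m + 1)) (PL1 m) (PR2 m) haM ha'M hc'M H1 H1' H3' (hq m).2
  have recC := recursion_c m μ (PR2 (m + 1)) (PR2 m) (PL1 m) hcM hc'M ha'M H3 H3' H1' (hq m).1
  have hszHL1 : szHL N w PL1 (m + 1)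
      = ∑ k ∈ Finset.range (m + 2), PL1 (m + 1) k * μ (((m + 1 : ℕ) : ℤ) - (k : ℤ)) :=
    pairL hw (PL1 (m + 1)) (m + 1) ((m + 1 : ℕ) : ℤ)
  have hszHL0 : szHL N w PL1 m
      = ∑ k ∈ Finset.range (m + 1), PL1 m k * μ (((m : ℕ) : ℤ) - (k : ℤ)) :=
    pairL hw (PL1 m) m ((m : ℕ) : ℤ)
  have hszHR1 : szHR N w PR1 (m + 1)
      = ∑ k ∈ Finset.range (m + 2), μ (((m + 1 : ℕ) : ℤ) - (k : ℤ)) * PR1 (m + 1) k :=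
    pairR hw (PR1 (m + 1)) (m + 1) ((m + 1 : ℕ) : ℤ)
  have hszHR0 : szHR N w PR1 m
      = ∑ k ∈ Finset.range (m + 1), μ (((m : ℕ) : ℤ) - (k : ℤ)) * PR1 m k :=
    pairR hw (PR1 m) m ((m : ℕ) : ℤ)
  have hK : szHR N w PR1 m
      = ∑ k ∈ Finset.range (m + 1), (PR2 m k)ᴴ * μ ((k : ℤ) - ((m : ℕ) : ℤ)) := by
    rw [hszHR0]
    exact HR_eq_K m μ (PR1 m) (PR2 m) hb'M hc'M H2' H3'
  -- the H^L recursion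
  have stepA : ∑ k ∈ Finset.range (m + 2), PL1 (m + 1) k * μ (((m + 1 : ℕ) : ℤ) - (k : ℤ))
      = (∑ i ∈ Finset.range (m + 1), PL1 m i * μ (((m + 1 : ℕ) : ℤ) - ((i + 1 : ℕ) : ℤ))) +
        PL1 (m + 1) 0 * ∑ i ∈ Finset.range (m + 1),
          (PR2 m i)ᴴ * μ (((m + 1 : ℕ) : ℤ) - ((m - i : ℕ) : ℤ)) := by
    rw [Finset.sum_congr rfl (fun k (hk : k ∈ Finset.range (m + 2)) =>
      show PL1 (m + 1) k * μ (((m + 1 : ℕ) : ℤ) - (k : ℤ))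
        = ((if k = 0 then 0 else PL1 m (k - 1)) +
            PL1 (m + 1) 0 * (if k = m + 1 then 0 else (PR2 m (m - k))ᴴ)) *
          μ (((m + 1 : ℕ) : ℤ) - (k : ℤ)) from by
        conv_lhs => rw [recA k (by rw [Finset.mem_range] at hk; omega)])]
    exact sum_split m μ (PL1 m) (fun i => (PR2 m i)ᴴ) (PL1 (m + 1) 0)
      (fun k => ((m + 1 : ℕ) : ℤ) - (k : ℤ))
  have e1 : ∑ i ∈ Finset.range (m + 1), PL1 m i * μ (((m + 1 : ℕ) : ℤ) - ((i + 1 : ℕ) : ℤ))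
      = ∑ i ∈ Finset.range (m + 1), PL1 m i * μ (((m : ℕ) : ℤ) - (i : ℤ)) :=
    sum_arg_congr _ _ _ _ _ (fun i _ => by push_cast; ring)
  have e2 : ∑ i ∈ Finset.range (m + 1), (PR2 m i)ᴴ * μ (((m + 1 : ℕ) : ℤ) - ((m - i : ℕ) : ℤ))
      = ∑ i ∈ Finset.range (m + 1), (PR2 m i)ᴴ * μ ((i : ℤ) + 1) :=
    sum_arg_congr _ _ _ _ _ (fun i hi => by rw [Finset.mem_range] at hi; omega)
  have hHLX : szHL N w PL1 (m + 1) = szHL N w PL1 m +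
      PL1 (m + 1) 0 * ∑ i ∈ Finset.range (m + 1), (PR2 m i)ᴴ * μ ((i : ℤ) + 1) := by
    rw [hszHL1, stepA, e1, e2, ← hszHL0]
  have stepC : ∑ k ∈ Finset.range (m + 2), (PR2 (m + 1) k)ᴴ * μ ((k : ℤ) - ((0 : ℕ) : ℤ))
      = (∑ i ∈ Finset.range (m + 1), (PR2 m i)ᴴ * μ (((i + 1 : ℕ) : ℤ) - ((0 : ℕ) : ℤ))) +
        (PR2 (m + 1) 0)ᴴ * ∑ i ∈ Finset.range (m + 1),
          PL1 m i * μ (((m - i : ℕ) : ℤ) - ((0 : ℕ) : ℤ)) := by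
    rw [Finset.sum_congr rfl (fun k (hk : k ∈ Finset.range (m + 2)) =>
      show (PR2 (m + 1) k)ᴴ * μ ((k : ℤ) - ((0 : ℕ) : ℤ))
        = ((if k = 0 then 0 else (PR2 m (k - 1))ᴴ) +
            (PR2 (m + 1) 0)ᴴ * (if k = m + 1 then 0 else PL1 m (m - k))) *
          μ ((k : ℤ) - ((0 : ℕ) : ℤ)) from by
        conv_lhs => rw [recC k (by rw [Finset.mem_range] at hk; omega)])]
    exact sum_split m μ (fun i => (PR2 m i)ᴴ) (PL1 m) ((PR2 (m + 1) 0)ᴴ)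
      (fun k => (k : ℤ) - ((0 : ℕ) : ℤ))
  have e3 : ∑ i ∈ Finset.range (m + 1), (PR2 m i)ᴴ * μ (((i + 1 : ℕ) : ℤ) - ((0 : ℕ) : ℤ))
      = ∑ i ∈ Finset.range (m + 1), (PR2 m i)ᴴ * μ ((i : ℤ) + 1) :=
    sum_arg_congr _ _ _ _ _ (fun i _ => by push_cast; ring)
  have e4 : ∑ i ∈ Finset.range (m + 1), PL1 m i * μ (((m - i : ℕ) : ℤ) - ((0 : ℕ) : ℤ))
      = ∑ i ∈ Finset.range (m + 1), PL1 m i * μ (((m : ℕ) : ℤ) - (i : ℤ)) :=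
    sum_arg_congr _ _ _ _ _ (fun i hi => by rw [Finset.mem_range] at hi; omega)
  have hX0 : (∑ i ∈ Finset.range (m + 1), (PR2 m i)ᴴ * μ ((i : ℤ) + 1)) +
      (PR2 (m + 1) 0)ᴴ * szHL N w PL1 m = 0 := by
    rw [hszHL0, ← e4, ← e3, ← stepC]
    exact H3 0 (by omega)
  have hHLfin : szHL N w PL1 (m + 1)
      = (1 - PL1 (m + 1) 0 * (PR2 (m + 1) 0)ᴴ) * szHL N w PL1 m := by
    rw [hHLX, eq_neg_of_add_eq_zero_left hX0]
    noncomm_ring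
  -- the H^R recursion
  have hKR1 : szHR N w PR1 (m + 1)
      = ∑ k ∈ Finset.range (m + 2), (PR2 (m + 1) k)ᴴ * μ ((k : ℤ) - ((m + 1 : ℕ) : ℤ)) := by
    rw [hszHR1]
    exact HR_eq_K (m + 1) μ (PR1 (m + 1)) (PR2 (m + 1)) hbM hcM H2 H3
  have stepD : ∑ k ∈ Finset.range (m + 2), (PR2 (m + 1) k)ᴴ * μ ((k : ℤ) - ((m + 1 : ℕ) : ℤ))
      = (∑ i ∈ Finset.range (m + 1), (PR2 m i)ᴴ * μ (((i + 1 : ℕ) : ℤ) - ((m + 1 : ℕ) : ℤ))) +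
        (PR2 (m + 1) 0)ᴴ * ∑ i ∈ Finset.range (m + 1),
          PL1 m i * μ (((m - i : ℕ) : ℤ) - ((m + 1 : ℕ) : ℤ)) := by
    rw [Finset.sum_congr rfl (fun k (hk : k ∈ Finset.range (m + 2)) =>
      show (PR2 (m + 1) k)ᴴ * μ ((k : ℤ) - ((m + 1 : ℕ) : ℤ))
        = ((if k = 0 then 0 else (PR2 m (k - 1))ᴴ) +
            (PR2 (m + 1) 0)ᴴ * (if k = m + 1 then 0 else PL1 m (m - k))) *
          μ ((k : ℤ) - ((m + 1 : ℕ) : ℤ)) from by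
        conv_lhs => rw [recC k (by rw [Finset.mem_range] at hk; omega)])]
    exact sum_split m μ (fun i => (PR2 m i)ᴴ) (PL1 m) ((PR2 (m + 1) 0)ᴴ)
      (fun k => (k : ℤ) - ((m + 1 : ℕ) : ℤ))
  have e5 : ∑ i ∈ Finset.range (m + 1), (PR2 m i)ᴴ * μ (((i + 1 : ℕ) : ℤ) - ((m + 1 : ℕ) : ℤ))
      = ∑ i ∈ Finset.range (m + 1), (PR2 m i)ᴴ * μ ((i : ℤ) - ((m : ℕ) : ℤ)) :=
    sum_arg_congr _ _ _ _ _ (fun i _ => by push_cast; ring)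
  have e6 : ∑ i ∈ Finset.range (m + 1), PL1 m i * μ (((m - i : ℕ) : ℤ) - ((m + 1 : ℕ) : ℤ))
      = ∑ i ∈ Finset.range (m + 1), PL1 m i * μ (-((i : ℤ) + 1)) :=
    sum_arg_congr _ _ _ _ _ (fun i hi => by rw [Finset.mem_range] at hi; omega)
  have stepE : ∑ k ∈ Finset.range (m + 2), PL1 (m + 1) k * μ (((0 : ℕ) : ℤ) - (k : ℤ))
      = (∑ i ∈ Finset.range (m + 1), PL1 m i * μ (((0 : ℕ) : ℤ) - ((i + 1 : ℕ) : ℤ))) +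
        PL1 (m + 1) 0 * ∑ i ∈ Finset.range (m + 1),
          (PR2 m i)ᴴ * μ (((0 : ℕ) : ℤ) - ((m - i : ℕ) : ℤ)) := by
    rw [Finset.sum_congr rfl (fun k (hk : k ∈ Finset.range (m + 2)) =>
      show PL1 (m + 1) k * μ (((0 : ℕ) : ℤ) - (k : ℤ))
        = ((if k = 0 then 0 else PL1 m (k - 1)) +
            PL1 (m + 1) 0 * (if k = m + 1 then 0 else (PR2 m (m - k))ᴴ)) *
          μ (((0 : ℕ) : ℤ) - (k : ℤ)) from by
        conv_lhs => rw [recA k (by rw [Finset.mem_range] at hk; omega)])]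
    exact sum_split m μ (PL1 m) (fun i => (PR2 m i)ᴴ) (PL1 (m + 1) 0)
      (fun k => ((0 : ℕ) : ℤ) - (k : ℤ))
  have e7 : ∑ i ∈ Finset.range (m + 1), PL1 m i * μ (((0 : ℕ) : ℤ) - ((i + 1 : ℕ) : ℤ))
      = ∑ i ∈ Finset.range (m + 1), PL1 m i * μ (-((i : ℤ) + 1)) :=
    sum_arg_congr _ _ _ _ _ (fun i _ => by push_cast; ring)
  have e8 : ∑ i ∈ Finset.range (m + 1), (PR2 m i)ᴴ * μ (((0 : ℕ) : ℤ) - ((m - i : ℕ) : ℤ))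
      = ∑ i ∈ Finset.range (m + 1), (PR2 m i)ᴴ * μ ((i : ℤ) - ((m : ℕ) : ℤ)) :=
    sum_arg_congr _ _ _ _ _ (fun i hi => by rw [Finset.mem_range] at hi; omega)
  have hT0 : (∑ i ∈ Finset.range (m + 1), PL1 m i * μ (-((i : ℤ) + 1))) +
      PL1 (m + 1) 0 * ∑ i ∈ Finset.range (m + 1), (PR2 m i)ᴴ * μ ((i : ℤ) - ((m : ℕ) : ℤ))
      = 0 := by
    rw [← e7, ← e8, ← stepE]
    exact H1 0 (by omega)
  have hHRfin : szHR N w PR1 (m + 1)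
      = (1 - (PR2 (m + 1) 0)ᴴ * PL1 (m + 1) 0) * szHR N w PR1 m := by
    rw [hKR1, stepD, e5, e6, hK, eq_neg_of_add_eq_zero_left hT0]
    noncomm_ring
  -- units
  have hUL0 : IsUnit (szHL N w PL1 m) := by
    rw [hszHL0]
    exact HL_unit m μ (PL1 m) ha'M H1' (hq (m + 1)).2
  have hUL1 : IsUnit (szHL N w PL1 (m + 1)) := by
    rw [hszHL1]
    exact HL_unit (m + 1) μ (PL1 (m + 1)) haM H1 (hq (m + 2)).2
  have hUR0 : IsUnit (szHR N w PR1 m) := by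
    rw [hszHR0]
    exact HR_unit m μ (PR1 m) hb'M H2' (hq (m + 1)).1
  have hUR1 : IsUnit (szHR N w PR1 (m + 1)) := by
    rw [hszHR1]
    exact HR_unit (m + 1) μ (PR1 (m + 1)) hbM H2 (hq (m + 2)).1
  have hdetR0 : IsUnit (szHR N w PR1 m).det := (Matrix.isUnit_iff_isUnit_det _).mp hUR0
  have hdetL0 : IsUnit (szHL N w PL1 m).det := (Matrix.isUnit_iff_isUnit_det _).mp hUL0
  have g1 : szHR N w PR1 (m + 1) * (szHR N w PR1 m)⁻¹
      = 1 - (PR2 (m + 1) 0)ᴴ * PL1 (m + 1) 0 := by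
    rw [hHRfin, Matrix.mul_assoc, Matrix.mul_nonsing_inv _ hdetR0, Matrix.mul_one]
  have g2 : szHL N w PL1 (m + 1) * (szHL N w PL1 m)⁻¹
      = 1 - PL1 (m + 1) 0 * (PR2 (m + 1) 0)ᴴ := by
    rw [hHLfin, Matrix.mul_assoc, Matrix.mul_nonsing_inv _ hdetL0, Matrix.mul_one]
  have hUinvR : IsUnit (szHR N w PR1 m)⁻¹ :=
    (Matrix.isUnit_iff_isUnit_det _).mpr (Matrix.isUnit_det_of_left_inverse (Matrix.mul_nonsing_inv _ hdetR0))
  have hUinvL : IsUnit (szHL N w PL1 m)⁻¹ :=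
    (Matrix.isUnit_iff_isUnit_det _).mpr (Matrix.isUnit_det_of_left_inverse (Matrix.mul_nonsing_inv _ hdetL0))
  have u1 : IsUnit (1 - (PR2 (m + 1) 0)ᴴ * PL1 (m + 1) 0) := by
    rw [← g1]
    exact hUR1.mul hUinvR
  have u2 : IsUnit (1 - PL1 (m + 1) 0 * (PR2 (m + 1) 0)ᴴ) := by
    rw [← g2]
    exact hUL1.mul hUinvL
  refine ⟨?_, ?_, ?_, ?_⟩
  · rw [szVer_eq PR2 (m + 1), szVer_eq PL1 (m + 1)]
    exact g1
  · rw [szVer_eq PR2 (m + 1), szVer_eq PL1 (m + 1)]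
    exact g2
  · rw [szVer_eq PR2 (m + 1), szVer_eq PL1 (m + 1)]
    exact u1
  · rw [szVer_eq PR2 (m + 1), szVer_eq PL1 (m + 1)]
    exact u2
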